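/- The poset of bracketings B(n) of n variables (ordered by removing pairs of brackets) is isomorphic to the poset I(n) of sets of pairwise compatible proper subintervals of [1,n-1], ordered by reverse inclusion. Here the isomorphism sends an interval [i,j] to the bracketing inserting a bracket around positions i through j+1, and a set of compatible intervals to the corresponding composite bracketing. -/

import Mathlib

/-- A proper subinterval `[p.1, p.2]` of `[1, n-1]`: an element of `P(n)`. -/
def PInt (n : ℕ) : Type :=
  {p : ℕ × ℕ // 1 ≤ p.1 ∧ p.1 ≤ p.2 ∧ p.2 ≤ n - 1 ∧ ¬(p.1 = 1 ∧ p.2 = n - 1)}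

/-- Two intervals are compatible: one is contained in the other, or their union is not an
interval properly containing both (i.e. they are disjoint and non-adjacent). -/
def CompatPInt {n : ℕ} (p q : PInt n) : Prop :=
  (p.1.1 ≤ q.1.1 ∧ q.1.2 ≤ p.1.2) ∨ (q.1.1 ≤ p.1.1 ∧ p.1.2 ≤ q.1.2) ∨
    p.1.2 + 1 < q.1.1 ∨ q.1.2 + 1 < p.1.1

/-- The poset `I(n)`: sets of pairwise compatible proper subintervals of `[1, n-1]`,
ordered by reverse inclusion (`ι ⪯ κ` iff `κ ⊆ ι`). -/
def IPoset (n : ℕ) : Type :=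
  {ι : Set (PInt n) // ι.Pairwise CompatPInt}

instance (n : ℕ) : PartialOrder (IPoset n) where
  le a b := b.1 ⊆ a.1
  le_refl a := le_refl a.1
  le_trans a b c hab hbc := Set.Subset.trans hbc hab
  le_antisymm a b hab hba := Subtype.ext (Set.Subset.antisymm hba hab)

/-- A bracket `(p.1 … p.2)` on the variables `1, …, n`: a subinterval of `[1, n]` of
length at least two, not the full interval.  -/
def Brk (n : ℕ) : Type :=
  {p : ℕ × ℕ // 1 ≤ p.1 ∧ p.1 < p.2 ∧ p.2 ≤ n ∧ ¬(p.1 = 1 ∧ p.2 = n)}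

/-- Two brackets may occur in a common meaningful bracketing iff they are nested or
disjoint. -/
def CompatBrk {n : ℕ} (p q : Brk n) : Prop :=
  (p.1.1 ≤ q.1.1 ∧ q.1.2 ≤ p.1.2) ∨ (q.1.1 ≤ p.1.1 ∧ p.1.2 ≤ q.1.2) ∨
    p.1.2 < q.1.1 ∨ q.1.2 < p.1.1

/-- The poset `B(n)` of meaningful bracketings of `n` variables: a bracketing is a set of
pairwise compatible brackets, and `b' ≺ b''` iff `b''` is obtained from `b'` by removing
brackets. -/
def BPoset (n : ℕ) : Type :=
  {β : Set (Brk n) // β.Pairwise CompatBrk}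

instance (n : ℕ) : PartialOrder (BPoset n) where
  le a b := b.1 ⊆ a.1
  le_refl a := le_refl a.1
  le_trans a b c hab hbc := Set.Subset.trans hbc hab
  le_antisymm a b hab hba := Subtype.ext (Set.Subset.antisymm hba hab)


def pintEquivBrk (n : ℕ) : PInt n ≃ Brk n where
  toFun p := ⟨(p.1.1, p.1.2 + 1), by obtain ⟨⟨a,b⟩, h⟩ := p; simp at h ⊢; omega⟩
  invFun b := ⟨(b.1.1, b.1.2 - 1), by obtain ⟨⟨a,b⟩, h⟩ := b; dsimp only at h ⊢; omega⟩
  left_inv p := by obtain ⟨⟨a,b⟩, h⟩ := p; simp; rfl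
  right_inv b := by obtain ⟨⟨a,b⟩, h⟩ := b; apply Subtype.ext; simp; omega

lemma compat_iff {n : ℕ} (p q : PInt n) :
    CompatBrk (pintEquivBrk n p) (pintEquivBrk n q) ↔ CompatPInt p q := by
  obtain ⟨⟨a,b⟩, hp⟩ := p; obtain ⟨⟨c,d⟩, hq⟩ := q
  show (a ≤ c ∧ d + 1 ≤ b + 1 ∨ c ≤ a ∧ b + 1 ≤ d + 1 ∨ b + 1 < c ∨ d + 1 < a) ↔
    (a ≤ c ∧ d ≤ b ∨ c ≤ a ∧ b ≤ d ∨ b + 1 < c ∨ d + 1 < a); omega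

/-- Shnider–Sternberg: the posets `B(n)` and `I(n)` are isomorphic, the
isomorphism sending an interval `[i, j]` to the bracket around positions `i, …, j+1`, and
a set of compatible intervals to the corresponding composite bracketing. -/
theorem bracketings_orderIso_compatible_intervals (n : ℕ) :
    ∃ e : IPoset n ≃o BPoset n,
      ∀ ι : IPoset n,
        (fun b : Brk n => b.1) '' (e ι).1 =
          (fun p : PInt n => (p.1.1, p.1.2 + 1)) '' ι.1 := by
  classical
  refine ⟨{ toFun := fun ι => ⟨(pintEquivBrk n) '' ι.1, ?_⟩,
            invFun := fun β => ⟨(pintEquivBrk n).symm '' β.1, ?_⟩,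
            left_inv := ?_, right_inv := ?_, map_rel_iff' := ?_ }, ?_⟩
  · rintro _ ⟨p, hp, rfl⟩ _ ⟨q, hq, rfl⟩ hne
    exact (compat_iff p q).mpr (ι.2 hp hq (fun h => hne (by rw [h])))
  · rintro _ ⟨p, hp, rfl⟩ _ ⟨q, hq, rfl⟩ hne
    have := β.2 hp hq (fun h => hne (by rw [h]))
    rw [← (pintEquivBrk n).apply_symm_apply p, ← (pintEquivBrk n).apply_symm_apply q] at this
    exact (compat_iff _ _).mp this
  · intro ι; apply Subtype.ext
    simp [Set.image_image]
  · intro β; apply Subtype.ext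
    simp [Set.image_image]
  · intro a b
    constructor
    · intro h
      exact fun p hp => by
        have := h (Set.mem_image_of_mem _ hp)
        obtain ⟨q, hq, hqe⟩ := this
        rwa [← (pintEquivBrk n).injective hqe]
    · intro h
      exact Set.image_mono h
  · intro ι
    show (fun b : Brk n => b.1) '' ((pintEquivBrk n) '' ι.1) = _
    rw [Set.image_image]
    rfl
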